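/- Fix n ≥ 2 and an index 1 ≤ i < n with j = i+1. For a real number q, let R_i(q) be the matrix indexed by 𝓔ₙ defined row-wise by: row (i,j) is q²·e_{ij}; row (k,l) is e_{kl} whenever {k,l} ∩ {i,j} = ∅ or {k,l} contains j but not i; and row (k,l) is (q²−q)·e_{ij} + q·e_{im} + (1−q)·e_{jm} whenever {k,l} = {i,m} with m ∉ {i,j}. Then for all real numbers q and q′ one has R_i(q)·R_i(q′) = R_i(q·q′). In particular R_i(1) is the identity matrix, and for q ≠ 0 the matrix R_i(q) is invertible with inverse R_i(q⁻¹). -/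
import Mathlib


/-- The index set `𝓔ₙ` of edges: pairs `(k,l)` with `k < l` in `Fin n`. -/
abbrev EdgeIdx (n : ℕ) : Type := {p : Fin n × Fin n // p.1 < p.2}

/-- The standard basis vector `e_{ab}` of `ℝ^{𝓔ₙ}`, viewed symmetrically in `a, b`
(with the convention `e_{mm} = 0`). -/
def eVec {n : ℕ} (a b : Fin n) : EdgeIdx n → ℝ :=
  fun c => if (c.1.1 = a ∧ c.1.2 = b) ∨ (c.1.1 = b ∧ c.1.2 = a) then 1 else 0

/-- The edge rescaling matrix `R_i(q) = R^{i,j}_{rc(i,j)}` (with `j = i+1`), rescaling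
the edge `e_{ij}` by `q` while fixing the edges of the right complement: row `(i,j)` is
`q²·e_{ij}`; rows `{k,l}` with `{k,l} ∩ {i,j} = ∅` or containing `j` but not `i` are
`e_{kl}`; and row `{i,m}` with `m ∉ {i,j}` is
`(q²−q)·e_{ij} + q·e_{im} + (1−q)·e_{jm}`. -/
def rcRescaleMatrix (n : ℕ) (i j : Fin n) (q : ℝ) : Matrix (EdgeIdx n) (EdgeIdx n) ℝ :=
  fun r c =>
    if r.1.1 = i ∧ r.1.2 = j then q ^ 2 * eVec i j c
    else if r.1.1 = i then
      (q ^ 2 - q) * eVec i j c + q * eVec i r.1.2 c + (1 - q) * eVec j r.1.2 c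
    else if r.1.2 = i then
      (q ^ 2 - q) * eVec i j c + q * eVec i r.1.1 c + (1 - q) * eVec j r.1.1 c
    else eVec r.1.1 r.1.2 c


lemma eVec_symm {n : ℕ} (a b : Fin n) : eVec a b = eVec b a := by
  funext c; simp [eVec, or_comm]

lemma eVec_apply_ordered {n : ℕ} {a b : Fin n} (hab : a < b) (c : EdgeIdx n) :
    eVec a b c = if c = ⟨(a, b), hab⟩ then 1 else 0 := by
  rcases c with ⟨⟨x, y⟩, hxy⟩
  simp only [eVec, Subtype.mk.injEq, Prod.mk.injEq]
  congr 1
  simp only [eq_iff_iff]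
  constructor
  · rintro (⟨rfl, rfl⟩ | ⟨rfl, rfl⟩)
    · exact ⟨rfl, rfl⟩
    · exact absurd hab (lt_asymm hxy)
  · rintro ⟨rfl, rfl⟩; exact Or.inl ⟨rfl, rfl⟩

lemma sum_eVec_mul {n : ℕ} {a b : Fin n} (hab : a < b) (f : EdgeIdx n → ℝ) :
    ∑ e : EdgeIdx n, eVec a b e * f e = f ⟨(a, b), hab⟩ := by
  rw [Fintype.sum_eq_single (⟨(a, b), hab⟩ : EdgeIdx n)]
  · simp [eVec_apply_ordered hab]
  · intro e he; simp [eVec_apply_ordered hab, he]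

lemma sum_row1 {n : ℕ} (A : ℝ) {a b : Fin n} (hab : a < b) (f : EdgeIdx n → ℝ) :
    ∑ e : EdgeIdx n, (A * eVec a b e) * f e = A * f ⟨(a, b), hab⟩ := by
  simp only [mul_assoc, ← Finset.mul_sum]
  rw [sum_eVec_mul hab]

lemma sum_row3 {n : ℕ} (A B C : ℝ) {a1 b1 a2 b2 a3 b3 : Fin n}
    (h1 : a1 < b1) (h2 : a2 < b2) (h3 : a3 < b3) (f : EdgeIdx n → ℝ) :
    ∑ e : EdgeIdx n, (A * eVec a1 b1 e + B * eVec a2 b2 e + C * eVec a3 b3 e) * f e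
      = A * f ⟨(a1, b1), h1⟩ + B * f ⟨(a2, b2), h2⟩ + C * f ⟨(a3, b3), h3⟩ := by
  simp only [add_mul, Finset.sum_add_distrib, mul_assoc, ← Finset.mul_sum]
  rw [sum_eVec_mul h1, sum_eVec_mul h2, sum_eVec_mul h3]

lemma R_apply_ij {n : ℕ} (i j : Fin n) (q : ℝ) (h : i < j) (c : EdgeIdx n) :
    rcRescaleMatrix n i j q ⟨(i, j), h⟩ c = q ^ 2 * eVec i j c := by
  simp [rcRescaleMatrix]

lemma R_apply_im {n : ℕ} (i j : Fin n) (q : ℝ) {m : Fin n} (h : i < m) (hm : m ≠ j)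
    (c : EdgeIdx n) :
    rcRescaleMatrix n i j q ⟨(i, m), h⟩ c
      = (q ^ 2 - q) * eVec i j c + q * eVec i m c + (1 - q) * eVec j m c := by
  simp [rcRescaleMatrix, hm]

lemma R_apply_ki {n : ℕ} (i j : Fin n) (q : ℝ) {k : Fin n} (h : k < i) (c : EdgeIdx n) :
    rcRescaleMatrix n i j q ⟨(k, i), h⟩ c
      = (q ^ 2 - q) * eVec i j c + q * eVec i k c + (1 - q) * eVec j k c := by
  simp [rcRescaleMatrix, h.ne]

lemma R_apply_other {n : ℕ} (i j : Fin n) (q : ℝ) {a b : Fin n} (h : a < b)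
    (ha : a ≠ i) (hb : b ≠ i) (c : EdgeIdx n) :
    rcRescaleMatrix n i j q ⟨(a, b), h⟩ c = eVec a b c := by
  simp [rcRescaleMatrix, ha, hb]

lemma rcMul (n : ℕ) (i j : Fin n) (hij : (i : ℕ) + 1 = (j : ℕ)) (q q' : ℝ) :
    rcRescaleMatrix n i j q * rcRescaleMatrix n i j q'
      = rcRescaleMatrix n i j (q * q') := by
  have hij : i < j := by rw [Fin.lt_def]; omega
  have hijne : i ≠ j := hij.ne
  ext ⟨⟨a, b⟩, hab⟩ c
  have hab' : a < b := hab
  rw [Matrix.mul_apply]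
  by_cases ha : a = i
  · obtain rfl : i = a := ha.symm
    by_cases hb : b = j
    · obtain rfl : j = b := hb.symm
      simp only [R_apply_ij _ _ _ hab]
      rw [sum_row1 _ hab', R_apply_ij _ _ _ hab']
      ring
    · have hjb : j < b := by
        have h1 : (b : ℕ) ≠ (j : ℕ) := fun h => hb (Fin.ext h)
        rw [Fin.lt_def] at hab' ⊢
        omega
      simp only [R_apply_im _ _ _ hab hb]
      rw [sum_row3 _ _ _ hij hab' hjb, R_apply_ij _ _ _ hij, R_apply_im _ _ _ hab' hb,
        R_apply_other i j q' hjb hijne.symm (hij.trans hjb).ne']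
      ring
  · by_cases hb : b = i
    · obtain rfl : i = b := hb.symm
      have haj : a < j := hab'.trans hij
      simp only [R_apply_ki _ _ _ hab, eVec_symm i a, eVec_symm j a]
      rw [sum_row3 _ _ _ hij hab' haj, R_apply_ij _ _ _ hij, R_apply_ki _ _ _ hab',
        R_apply_other i j q' haj ha hijne.symm]
      simp only [eVec_symm i a, eVec_symm j a]
      ring
    · simp only [R_apply_other i j q hab ha hb, R_apply_other i j (q*q') hab ha hb]
      rw [sum_eVec_mul hab', R_apply_other i j q' hab' ha hb]

lemma rcOne (n : ℕ) (i j : Fin n) (hij : (i : ℕ) + 1 = (j : ℕ)) :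
    rcRescaleMatrix n i j 1 = 1 := by
  have hij : i < j := by rw [Fin.lt_def]; omega
  ext ⟨⟨a, b⟩, hab⟩ c
  have hab' : a < b := hab
  have key : rcRescaleMatrix n i j 1 ⟨(a, b), hab⟩ c = eVec a b c := by
    by_cases ha : a = i
    · obtain rfl : i = a := ha.symm
      by_cases hb : b = j
      · obtain rfl : j = b := hb.symm
        rw [R_apply_ij _ _ _ hab]; ring
      · rw [R_apply_im _ _ _ hab hb]; ring
    · by_cases hb : b = i
      · obtain rfl : i = b := hb.symm
        rw [R_apply_ki _ _ _ hab, eVec_symm i a]; ring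
      · rw [R_apply_other i j 1 hab ha hb]
  rw [key, eVec_apply_ordered hab', Matrix.one_apply]
  simp [eq_comm]


/-- **Edge rescaling maps compose and are invertible.** For `j = i+1`, the rescaling
matrices satisfy `R_i(q)·R_i(q′) = R_i(q·q′)`; in particular `R_i(1)` is the identity
and, for `q ≠ 0`, `R_i(q)` is invertible with inverse `R_i(q⁻¹)`. -/
theorem rcRescaleMatrix_mul (n : ℕ) (hn : 2 ≤ n) (i j : Fin n)
    (hij : (i : ℕ) + 1 = (j : ℕ)) :
    (∀ q q' : ℝ, rcRescaleMatrix n i j q * rcRescaleMatrix n i j q'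
      = rcRescaleMatrix n i j (q * q')) ∧
    rcRescaleMatrix n i j 1 = 1 ∧
    (∀ q : ℝ, q ≠ 0 →
      rcRescaleMatrix n i j q * rcRescaleMatrix n i j q⁻¹ = 1 ∧
      rcRescaleMatrix n i j q⁻¹ * rcRescaleMatrix n i j q = 1) := by
  refine ⟨rcMul n i j hij, rcOne n i j hij, fun q hq => ⟨?_, ?_⟩⟩
  · rw [rcMul n i j hij, mul_inv_cancel₀ hq, rcOne n i j hij]
  · rw [rcMul n i j hij, inv_mul_cancel₀ hq, rcOne n i j hij]
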